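/- arXiv:1807.01852 — 3 statements merged into one kernel-verified Lean document; each statement's English description precedes it below -/
import Mathlib

section
/- For any real number p and any q with 0 ≤ q ≤ 1, we have log(1 - q(1 - exp(p))) ≤ p·q + p²/8. -/
open Real

theorem log_one_sub_mul_one_sub_exp_le (p q : ℝ) (hq0 : 0 ≤ q) (hq1 : q ≤ 1) :
    Real.log (1 - q * (1 - Real.exp p)) ≤ p * q + p ^ 2 / 8 := by
  set c : ℝ := 1 - q with hc
  have hc0 : 0 ≤ c := by simp [hc]; linarith
  have hD : ∀ x : ℝ, 0 < c + q * Real.exp x := by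
    intro x
    rcases eq_or_lt_of_le hq0 with h | h
    · have : c = 1 := by simp [hc, ← h]
      positivity
    · have := Real.exp_pos x
      nlinarith
  set g : ℝ → ℝ := fun x => x * q + x ^ 2 / 8 - Real.log (c + q * Real.exp x) with hgdef
  set g1 : ℝ → ℝ := fun x => q + x / 4 - q * Real.exp x / (c + q * Real.exp x) with hg1def
  have hDd : ∀ x : ℝ, HasDerivAt (fun x => c + q * Real.exp x) (q * Real.exp x) x := by
    intro x
    exact ((Real.hasDerivAt_exp x).const_mul q).const_add c
  have hg : ∀ x : ℝ, HasDerivAt g (g1 x) x := by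
    intro x
    have h1 : HasDerivAt (fun x : ℝ => x * q + x ^ 2 / 8) (q + x / 4) x := by
      have := ((hasDerivAt_id x).mul_const q).add
        (((hasDerivAt_pow 2 x)).div_const 8)
      refine this.congr_deriv ?_
      norm_num
      ring
    have h2 : HasDerivAt (fun x => Real.log (c + q * Real.exp x))
        (q * Real.exp x / (c + q * Real.exp x)) x := (hDd x).log (ne_of_gt (hD x))
    exact h1.sub h2
  have hg1 : ∀ x : ℝ, HasDerivAt g1
      (1 / 4 - q * Real.exp x * c / (c + q * Real.exp x) ^ 2) x := by
    intro x
    have hnum : HasDerivAt (fun x => q * Real.exp x) (q * Real.exp x) x :=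
      (Real.hasDerivAt_exp x).const_mul q
    have hdiv : HasDerivAt (fun x => q * Real.exp x / (c + q * Real.exp x))
        ((q * Real.exp x * (c + q * Real.exp x) - q * Real.exp x * (q * Real.exp x)) /
          (c + q * Real.exp x) ^ 2) x := hnum.div (hDd x) (ne_of_gt (hD x))
    have h1 : HasDerivAt (fun x : ℝ => q + x / 4) (1 / 4) x := by
      simpa using (((hasDerivAt_id x)).div_const 4).const_add q
    have := h1.sub hdiv
    refine this.congr_deriv ?_
    have h := ne_of_gt (hD x)
    field_simp
    ring
  have hg1nonneg : ∀ x : ℝ, 0 ≤ 1 / 4 - q * Real.exp x * c / (c + q * Real.exp x) ^ 2 := by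
    intro x
    rw [sub_nonneg, div_le_iff₀ (pow_pos (hD x) 2)]
    nlinarith [sq_nonneg (q * Real.exp x - c), hD x]
  have hg1mono : Monotone g1 := by
    apply monotone_of_deriv_nonneg
    · intro x; exact (hg1 x).differentiableAt
    · intro x; rw [(hg1 x).deriv]; exact hg1nonneg x
  have hcq : c + q * Real.exp 0 = 1 := by simp [hc]
  have hg10 : g1 0 = 0 := by
    show q + 0 / 4 - q * Real.exp 0 / (c + q * Real.exp 0) = 0
    rw [hcq]; simp
  have hg0 : g 0 = 0 := by
    show 0 * q + 0 ^ 2 / 8 - Real.log (c + q * Real.exp 0) = 0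
    rw [hcq]; simp
  have hgcont : Continuous g := Differentiable.continuous (fun x => (hg x).differentiableAt)
  have key : 0 ≤ g p := by
    rcases le_or_gt 0 p with hp | hp
    · have hmono : MonotoneOn g (Set.Ici (0 : ℝ)) := by
        apply monotoneOn_of_deriv_nonneg (convex_Ici 0)
        · exact hgcont.continuousOn
        · intro x hx
          exact ((hg x).differentiableAt).differentiableWithinAt
        · intro x hx
          rw [(hg x).deriv]
          have : (0 : ℝ) ≤ g1 0 := hg10.ge
          calc (0 : ℝ) = g1 0 := hg10.symm
            _ ≤ g1 x := hg1mono (le_of_lt (by simpa using hx))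
      have := hmono (Set.self_mem_Ici) (Set.mem_Ici.mpr hp) hp
      linarith [hg0 ▸ this]
    · have hanti : AntitoneOn g (Set.Iic (0 : ℝ)) := by
        apply antitoneOn_of_deriv_nonpos (convex_Iic 0)
        · exact hgcont.continuousOn
        · intro x hx
          exact ((hg x).differentiableAt).differentiableWithinAt
        · intro x hx
          rw [(hg x).deriv]
          calc g1 x ≤ g1 0 := hg1mono (le_of_lt (by simpa using hx))
            _ = 0 := hg10
      have := hanti (Set.mem_Iic.mpr hp.le) (Set.self_mem_Iic) hp.le
      linarith [hg0 ▸ this]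
  have heq : 1 - q * (1 - Real.exp p) = c + q * Real.exp p := by ring
  rw [heq]
  have : g p = p * q + p ^ 2 / 8 - Real.log (c + q * Real.exp p) := rfl
  linarith [this ▸ key]
end

section
/- Let A be a Hermitian matrix with 0 ≤ A ≤ I and let x, y ≥ 0 be real numbers. Then exp(x·A + y·(I − A)) ≤ exp(x)·A + exp(y)·(I − A) in the Loewner order, i.e. exp(x·A + y·(I−A)) ≤ exp(y)·I + (exp(x) − exp(y))·A. -/
open Matrix
open scoped ComplexOrder

/-- Operator Jensen inequality: for a Hermitian matrix `A` with `0 ≤ A ≤ I` and reals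
`x, y ≥ 0`, we have `exp(x•A + y•(I−A)) ≤ exp(y)•I + (exp(x) − exp(y))•A` in the
Loewner order. -/
theorem matrix_exp_jensen {d : ℕ} (A : Matrix (Fin d) (Fin d) ℂ)
    (hA : A.IsHermitian) (hA0 : A.PosSemidef) (hA1 : ((1 : Matrix (Fin d) (Fin d) ℂ) - A).PosSemidef)
    (x y : ℝ) (hx : 0 ≤ x) (hy : 0 ≤ y) :
    (Real.exp y • (1 : Matrix (Fin d) (Fin d) ℂ) + (Real.exp x - Real.exp y) • A
      - NormedSpace.exp (x • A + y • ((1 : Matrix (Fin d) (Fin d) ℂ) - A))).PosSemidef := by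
  set U : Matrix (Fin d) (Fin d) ℂ := (hA.eigenvectorUnitary : Matrix (Fin d) (Fin d) ℂ) with hUdef
  have hUU : star U * U = 1 := mem_unitaryGroup_iff'.mp hA.eigenvectorUnitary.2
  have hUU' : U * star U = 1 := mem_unitaryGroup_iff.mp hA.eigenvectorUnitary.2
  have hUinv : U⁻¹ = star U := inv_eq_left_inv hUU
  have hUunit : IsUnit U := ⟨⟨U, star U, hUU', hUU⟩, rfl⟩
  set ev := hA.eigenvalues with hev
  have h0 : ∀ i, 0 ≤ ev i := fun i => hA0.eigenvalues_nonneg i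
  have h1 : ∀ i, ev i ≤ 1 := by
    intro i
    have hv := hA.mulVec_eigenvectorBasis i
    have hnorm : star ⇑(hA.eigenvectorBasis i) ⬝ᵥ ⇑(hA.eigenvectorBasis i) = 1 := by
      have h := hA.eigenvectorBasis.orthonormal.1 i
      have := inner_self_eq_norm_sq_to_K (𝕜 := ℂ) (hA.eigenvectorBasis i)
      rw [EuclideanSpace.inner_eq_star_dotProduct] at this
      rw [dotProduct_comm]
      simpa [h] using this
    have hq := hA1.dotProduct_mulVec_nonneg ⇑(hA.eigenvectorBasis i)
    rw [sub_mulVec, one_mulVec, dotProduct_sub, hv, dotProduct_smul, hnorm] at hq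
    rw [Complex.real_smul, mul_one, Complex.le_def] at hq
    simp at hq
    exact hq
  have hspec : A = U * diagonal (fun i => ((ev i : ℝ) : ℂ)) * star U := hA.spectral_theorem
  set D : Matrix (Fin d) (Fin d) ℂ := diagonal (fun i => ((ev i : ℝ) : ℂ)) with hD
  have comb : ∀ (a b : ℝ) (M N : Matrix (Fin d) (Fin d) ℂ),
      a • (U * M * star U) + b • (U * N * star U) = U * (a • M + b • N) * star U := by
    intro a b M N
    simp only [Matrix.mul_add, Matrix.add_mul, mul_smul_comm, smul_mul_assoc]
  have hone : ((1 : Matrix (Fin d) (Fin d) ℂ) - A) = U * (1 - D) * star U := by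
    rw [mul_sub, mul_one, sub_mul, hUU', ← hspec]
  have diag1 : ∀ (a b : ℝ),
      a • D + b • ((1 : Matrix (Fin d) (Fin d) ℂ) - D)
        = diagonal (fun i => ((a * ev i + b * (1 - ev i) : ℝ) : ℂ)) := by
    intro a b
    ext i j
    rcases eq_or_ne i j with rfl | hij
    · simp only [Matrix.add_apply, Matrix.smul_apply, Matrix.sub_apply, Matrix.one_apply_eq,
        hD, diagonal_apply_eq, Complex.real_smul, smul_eq_mul]
      push_cast
      ring
    · simp [hD, Matrix.one_apply, hij, diagonal_apply_ne _ hij]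
  have diag2 : ∀ (a b : ℝ),
      a • (1 : Matrix (Fin d) (Fin d) ℂ) + b • D
        = diagonal (fun i => ((a + b * ev i : ℝ) : ℂ)) := by
    intro a b
    ext i j
    rcases eq_or_ne i j with rfl | hij
    · simp only [Matrix.add_apply, Matrix.smul_apply, Matrix.one_apply_eq,
        hD, diagonal_apply_eq, Complex.real_smul, smul_eq_mul]
      push_cast
      ring
    · simp [hD, Matrix.one_apply, hij, diagonal_apply_ne _ hij]
  have hArg : x • A + y • ((1 : Matrix (Fin d) (Fin d) ℂ) - A)
      = U * diagonal (fun i => ((x * ev i + y * (1 - ev i) : ℝ) : ℂ)) * star U := by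
    rw [hone]
    nth_rewrite 1 [hspec]
    rw [comb, diag1]
  have hLHS : Real.exp y • (1 : Matrix (Fin d) (Fin d) ℂ) + (Real.exp x - Real.exp y) • A
      = U * diagonal (fun i => ((Real.exp y + (Real.exp x - Real.exp y) * ev i : ℝ) : ℂ)) * star U := by
    have h1 : (1 : Matrix (Fin d) (Fin d) ℂ) = U * 1 * star U := by rw [mul_one, hUU']
    nth_rewrite 1 [h1]
    nth_rewrite 1 [hspec]
    rw [comb, diag2]
  have hExp : NormedSpace.exp (x • A + y • ((1 : Matrix (Fin d) (Fin d) ℂ) - A))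
      = U * diagonal (fun i => ((Real.exp (x * ev i + y * (1 - ev i)) : ℝ) : ℂ)) * star U := by
    rw [hArg, ← hUinv]
    rw [Matrix.exp_conj U _ hUunit, Matrix.exp_diagonal, hUinv]
    have : (NormedSpace.exp fun i => ((x * ev i + y * (1 - ev i) : ℝ) : ℂ))
        = fun i => ((Real.exp (x * ev i + y * (1 - ev i)) : ℝ) : ℂ) := by
      rw [Pi.exp_def]
      funext i
      rw [← Complex.exp_eq_exp_ℂ, Complex.ofReal_exp]
    rw [this]
  rw [hLHS, hExp, ← sub_mul, ← mul_sub, diagonal_sub]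
  rw [show star U = Uᴴ from rfl]
  refine Matrix.PosSemidef.mul_mul_conjTranspose_same ?_ U
  refine Matrix.posSemidef_diagonal_iff.mpr fun i => ?_
  rw [← Complex.ofReal_sub, Complex.zero_le_real, sub_nonneg]
  have harg : x * ev i + y * (1 - ev i) = ev i * x + (1 - ev i) * y := by ring
  have hcvx := convexOn_exp.2 (Set.mem_univ x) (Set.mem_univ y)
    (show (0:ℝ) ≤ ev i from h0 i) (show (0:ℝ) ≤ 1 - ev i by linarith [h1 i]) (by ring)
  simp only [smul_eq_mul] at hcvx
  rw [harg]
  linarith [hcvx]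
end

section
/- (Noisy loss expectation.) Let ρ, σ be d×d density matrices with σ independent of the measurement randomness. Let X be uniform over the d²−1 non-identity Paulis, and conditional on X let ŷ be a random variable with E[ŷ|X] = tr(ρX) and Var[ŷ|X] = (1 − tr(ρX)²)/N. Then E[(tr(σX) − ŷ)²] = (d/(d²−1))·(‖σ − ρ‖_F² + (d − ‖ρ‖_F²)/N). -/
open Matrix
open scoped ComplexOrder

/-- Squared Frobenius norm `‖A‖_F² = tr(AᴴA)`. -/
noncomputable def frobSq {d : ℕ} (A : Matrix (Fin d) (Fin d) ℂ) : ℝ :=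
  ((Aᴴ * A).trace).re

/-- Parseval-type identity for an orthogonal family of `d²` matrices. -/
lemma pauli_parseval {d : ℕ} (hd : 0 < d) (U : Fin (d ^ 2) → Matrix (Fin d) (Fin d) ℂ)
    (horth : ∀ i j, ((U i)ᴴ * U j).trace = if i = j then (d : ℂ) else 0)
    (A : Matrix (Fin d) (Fin d) ℂ) :
    ∑ i, ((U i)ᴴ * A).trace * star (((U i)ᴴ * A).trace) = (d : ℂ) * (Aᴴ * A).trace := by
  have hdC : (d : ℂ) ≠ 0 := by exact_mod_cast hd.ne'
  haveI : Nonempty (Fin (d ^ 2)) := ⟨⟨0, by positivity⟩⟩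
  -- linear independence
  have hLI : LinearIndependent ℂ U := by
    rw [Fintype.linearIndependent_iff]
    intro g hg j
    have h1 : ((U j)ᴴ * (∑ i, g i • U i)).trace = g j * d := by
      rw [Matrix.mul_sum, Matrix.trace_sum]
      simp only [Matrix.mul_smul, Matrix.trace_smul, horth]
      simp [Finset.sum_ite_eq, smul_eq_mul]
    rw [hg] at h1
    simp only [Matrix.mul_zero, Matrix.trace_zero] at h1
    exact (mul_eq_zero.mp h1.symm).resolve_right hdC
  have hcard : Fintype.card (Fin (d ^ 2)) = Module.finrank ℂ (Matrix (Fin d) (Fin d) ℂ) := by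
    simp [Module.finrank_matrix, sq]
  let B := basisOfLinearIndependentOfCardEqFinrank hLI hcard
  have hB : ⇑B = U := coe_basisOfLinearIndependentOfCardEqFinrank hLI hcard
  have hrepr : A = ∑ i, B.repr A i • U i := by
    conv_lhs => rw [← B.sum_repr A]
    simp [hB]
  have hc : ∀ j, ((U j)ᴴ * A).trace = B.repr A j * d := by
    intro j
    conv_lhs => rw [hrepr]
    rw [Matrix.mul_sum, Matrix.trace_sum]
    simp only [Matrix.mul_smul, Matrix.trace_smul, horth]
    simp [Finset.sum_ite_eq, smul_eq_mul]
  have hc' : ∀ j, (Aᴴ * U j).trace = star (B.repr A j) * d := by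
    intro j
    have : (Aᴴ * U j) = ((U j)ᴴ * A)ᴴ := by simp [Matrix.conjTranspose_mul]
    rw [this, Matrix.trace_conjTranspose, hc]
    simp [mul_comm]
  have htr : (Aᴴ * A).trace = ∑ i, B.repr A i * (star (B.repr A i) * d) := by
    nth_rewrite 2 [hrepr]
    rw [Matrix.mul_sum, Matrix.trace_sum]
    refine Finset.sum_congr rfl fun i _ => ?_
    rw [Matrix.mul_smul, Matrix.trace_smul, hc' i, smul_eq_mul]
  rw [htr, Finset.mul_sum]
  refine Finset.sum_congr rfl fun i _ => ?_
  rw [hc i]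
  simp only [star_mul', star_natCast]
  ring

/-- Real form of the Parseval identity for Hermitian `A`. -/
lemma pauli_parseval_re {d : ℕ} (hd : 0 < d) (U : Fin (d ^ 2) → Matrix (Fin d) (Fin d) ℂ)
    (hherm : ∀ i, (U i)ᴴ = U i)
    (horth : ∀ i j, ((U i)ᴴ * U j).trace = if i = j then (d : ℂ) else 0)
    (A : Matrix (Fin d) (Fin d) ℂ) (hA : Aᴴ = A) :
    ∑ i, (((A * U i).trace).re) ^ 2 = (d : ℝ) * frobSq A := by
  have key := pauli_parseval hd U horth A
  have hci : ∀ i, ((U i)ᴴ * A).trace = (A * U i).trace := by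
    intro i; rw [hherm, Matrix.trace_mul_comm]
  have hstar : ∀ i, star ((A * U i).trace) = (A * U i).trace := by
    intro i
    rw [← Matrix.trace_conjTranspose, Matrix.conjTranspose_mul, hherm, hA,
      Matrix.trace_mul_comm]
  have hre : ∀ i, (A * U i).trace = ((((A * U i).trace).re : ℝ) : ℂ) := by
    intro i
    exact (Complex.conj_eq_iff_re.mp (hstar i)).symm
  have key2 : ((∑ i, (((A * U i).trace).re) ^ 2 : ℝ) : ℂ) = (d : ℂ) * (Aᴴ * A).trace := by
    rw [← key]
    push_cast
    refine Finset.sum_congr rfl fun i _ => ?_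
    rw [hci i, hstar i]
    conv_rhs => rw [hre i]
    ring
  have := congrArg Complex.re key2
  simpa [frobSq, ← Complex.ofReal_pow] using this

/-- Noisy loss expectation: with `X` uniform over the non-identity Paulis and, given `X`,
`ŷ` with mean `tr(ρX)` and variance `(1 − tr(ρX)²)/N`, one has
`E[(tr(σX) − ŷ)²] = (d/(d²−1))·(‖σ − ρ‖_F² + (d − ‖ρ‖_F²)/N)`. -/
theorem expectation_loss_noisy {d : ℕ} (hd : 1 < d) (N : ℝ) (hN : 0 < N)
    (U : Fin (d ^ 2) → Matrix (Fin d) (Fin d) ℂ)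
    (hU0 : ∀ i : Fin (d ^ 2), (i : ℕ) = 0 → U i = 1)
    (hherm : ∀ i, (U i)ᴴ = U i)
    (hunitary : ∀ i, (U i)ᴴ * U i = 1)
    (horth : ∀ i j, ((U i)ᴴ * U j).trace = if i = j then (d : ℂ) else 0)
    (ρ σ : Matrix (Fin d) (Fin d) ℂ)
    (hρ : ρ.PosSemidef) (hρtr : ρ.trace = 1)
    (hσ : σ.PosSemidef) (hσtr : σ.trace = 1)
    -- finite noise model for the outcome `ŷ` conditional on the measurement `U i`
    (V : Type*) [Fintype V]
    (w : Fin (d ^ 2) → V → ℝ) (val : Fin (d ^ 2) → V → ℝ)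
    (hw0 : ∀ i v, 0 ≤ w i v)
    (hw1 : ∀ i, ∑ v, w i v = 1)
    (hmean : ∀ i : Fin (d ^ 2), (i : ℕ) ≠ 0 →
      ∑ v, w i v * val i v = ((ρ * U i).trace).re)
    (hvar : ∀ i : Fin (d ^ 2), (i : ℕ) ≠ 0 →
      ∑ v, w i v * (val i v - ((ρ * U i).trace).re) ^ 2
        = (1 - (((ρ * U i).trace).re) ^ 2) / N) :
    ((d : ℝ) ^ 2 - 1)⁻¹ *
        ∑ i ∈ Finset.univ.filter (fun i : Fin (d ^ 2) => (i : ℕ) ≠ 0),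
          ∑ v, w i v * (((σ * U i).trace).re - val i v) ^ 2
      = ((d : ℝ) / ((d : ℝ) ^ 2 - 1)) * (frobSq (σ - ρ) + ((d : ℝ) - frobSq ρ) / N) := by
  have hdpos : 0 < d := lt_trans one_pos hd
  have hpos : 0 < d ^ 2 := by positivity
  set i0 : Fin (d ^ 2) := ⟨0, hpos⟩ with hi0
  set F := Finset.univ.filter (fun i : Fin (d ^ 2) => (i : ℕ) ≠ 0) with hF
  have hU1 : U i0 = 1 := hU0 i0 rfl
  -- per-measurement conditional second moment
  have key : ∀ i ∈ F, ∑ v, w i v * (((σ * U i).trace).re - val i v) ^ 2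
      = (((σ * U i).trace).re - ((ρ * U i).trace).re) ^ 2
        + (1 - (((ρ * U i).trace).re) ^ 2) / N := by
    intro i hiF
    have hi : (i : ℕ) ≠ 0 := (Finset.mem_filter.mp hiF).2
    set s := ((σ * U i).trace).re with hs
    set m := ((ρ * U i).trace).re with hm
    have expand : ∑ v, w i v * (s - val i v) ^ 2
        = (s - m) ^ 2 * (∑ v, w i v)
          + (∑ v, w i v * (val i v - m) ^ 2)
          - 2 * (s - m) * ((∑ v, w i v * val i v) - m * (∑ v, w i v)) := by
      have step : ∀ v ∈ (Finset.univ : Finset V),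
          w i v * (s - val i v) ^ 2
            = (s - m) ^ 2 * w i v + w i v * (val i v - m) ^ 2
              - 2 * (s - m) * (w i v * val i v - m * w i v) := fun v _ => by ring
      rw [Finset.sum_congr rfl step]
      simp only [Finset.sum_sub_distrib, Finset.sum_add_distrib, ← Finset.mul_sum]
    rw [expand, hw1 i, hmean i hi, hvar i hi]
    ring
  rw [Finset.sum_congr rfl key, Finset.sum_add_distrib]
  -- rewrite the difference of traces
  have hsub : ∀ i : Fin (d ^ 2),
      ((σ * U i).trace).re - ((ρ * U i).trace).re = (((σ - ρ) * U i).trace).re := by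
    intro i; rw [Matrix.sub_mul, Matrix.trace_sub, Complex.sub_re]
  have hAherm : (σ - ρ)ᴴ = σ - ρ := by
    rw [Matrix.conjTranspose_sub, hσ.1, hρ.1]
  -- sum over F vs sum over univ
  have hFe : F = Finset.univ.erase i0 := by
    ext j
    simp [hF, hi0, Fin.ext_iff]
  have hsplit : ∀ f : Fin (d ^ 2) → ℝ, ∑ i ∈ F, f i = (∑ i, f i) - f i0 := by
    intro f
    rw [hFe, Finset.sum_erase_eq_sub (Finset.mem_univ i0)]
  have hcardN : F.card = d ^ 2 - 1 := by
    rw [hFe, Finset.card_erase_of_mem (Finset.mem_univ _), Finset.card_univ, Fintype.card_fin]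
  -- Parseval identities
  have P1 : ∑ i, ((((σ - ρ) * U i).trace).re) ^ 2 = (d : ℝ) * frobSq (σ - ρ) :=
    pauli_parseval_re hdpos U hherm horth _ hAherm
  have P2 : ∑ i, (((ρ * U i).trace).re) ^ 2 = (d : ℝ) * frobSq ρ :=
    pauli_parseval_re hdpos U hherm horth _ hρ.1
  -- values at the identity
  have e1 : (((σ - ρ) * U i0).trace).re = 0 := by
    rw [hU1, Matrix.mul_one, Matrix.trace_sub, hσtr, hρtr]
    simp
  have e2 : ((ρ * U i0).trace).re = 1 := by
    rw [hU1, Matrix.mul_one, hρtr]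
    simp
  have S1 : ∑ i ∈ F, (((σ * U i).trace).re - ((ρ * U i).trace).re) ^ 2
      = (d : ℝ) * frobSq (σ - ρ) := by
    simp only [hsub]
    rw [hsplit, P1, e1]
    ring
  have S2 : ∑ i ∈ F, (1 - (((ρ * U i).trace).re) ^ 2) / N
      = ((d : ℝ) ^ 2 - (d : ℝ) * frobSq ρ) / N := by
    have h2 : ∑ i ∈ F, (((ρ * U i).trace).re) ^ 2 = (d : ℝ) * frobSq ρ - 1 := by
      rw [hsplit, P2, e2]
      ring
    rw [← Finset.sum_div, Finset.sum_sub_distrib, h2, Finset.sum_const, hcardN]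
    have hcast : ((d ^ 2 - 1 : ℕ) : ℝ) = (d : ℝ) ^ 2 - 1 := by
      have h1 : 1 ≤ d ^ 2 := hpos
      push_cast [Nat.cast_sub h1]
      ring
    rw [nsmul_eq_mul, hcast]
    ring_nf
  rw [S1, S2]
  have hd2 : (d : ℝ) ^ 2 - 1 ≠ 0 := by
    have h2 : (2 : ℝ) ≤ (d : ℝ) := by exact_mod_cast hd
    nlinarith
  field_simp
end
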